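/- (Convex SGD rate under WGC) If f is convex, L-smooth, minimized at w*, and its stochastic gradients are unbiased and satisfy E_z‖∇f(w,z)‖² ≤ 2ρL[f(w) − f(w*)], then SGD with constant step-size η = 1/(4ρL) satisfies, for the averaged iterate w̄_k = (1/k)Σ_{i=1}^k w_i starting from w₀: E[f(w̄_k)] − f(w*) ≤ 4(1+ρ)L‖w₀ − w*‖²/k, assuming additionally f(w₀) − f(w*) ≤ (L/2)‖w₀ − w*‖². -/

import Mathlib

open scoped RealInnerProductSpace
open Finset

lemma sum_update_le {n k : ℕ} (hn : 0 < n) (i : Fin k) (φ ψ : (Fin k → Fin n) → ℝ)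
    (hψ : ∀ σ z, ψ (Function.update σ i z) = ψ σ)
    (h : ∀ σ, ∑ z : Fin n, φ (Function.update σ i z) ≤ (n : ℝ) * ψ σ) :
    ∑ σ : Fin k → Fin n, φ σ ≤ ∑ σ : Fin k → Fin n, ψ σ := by
  classical
  set e := Equiv.funSplitAt i (Fin n) with he
  have key : ∀ (θ : (Fin k → Fin n) → ℝ), ∑ σ : Fin k → Fin n, θ σ
      = ∑ r : {j : Fin k // j ≠ i} → Fin n, ∑ z : Fin n, θ (e.symm (z, r)) := by
    intro θ
    rw [← Equiv.sum_comp e.symm θ, Fintype.sum_prod_type, Finset.sum_comm]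
  have hupd : ∀ (z z' : Fin n) (r : {j : Fin k // j ≠ i} → Fin n),
      Function.update (e.symm (z', r)) i z = e.symm (z, r) := by
    intro z z' r
    funext j
    by_cases hj : j = i
    · subst hj; simp [he, Equiv.funSplitAt, Equiv.piSplitAt, Function.update]
    · simp [he, Equiv.funSplitAt, Equiv.piSplitAt, Function.update, hj]
  have z0 : Fin n := ⟨0, hn⟩
  rw [key φ, key ψ]
  refine Finset.sum_le_sum fun r _ => ?_
  have h1 : ∑ z : Fin n, φ (e.symm (z, r)) = ∑ z : Fin n, φ (Function.update (e.symm (z0, r)) i z) := by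
    refine Finset.sum_congr rfl fun z _ => ?_
    rw [hupd]
  have h2 : ∑ z : Fin n, ψ (e.symm (z, r)) = ∑ z : Fin n, ψ (Function.update (e.symm (z0, r)) i z) := by
    refine Finset.sum_congr rfl fun z _ => ?_
    rw [hupd]
  rw [h1, h2]
  calc ∑ z : Fin n, φ (Function.update (e.symm (z0, r)) i z) ≤ (n : ℝ) * ψ (e.symm (z0, r)) :=
        h _
    _ = ∑ z : Fin n, ψ (Function.update (e.symm (z0, r)) i z) := by
        rw [Finset.sum_congr rfl fun z _ => hψ (e.symm (z0, r)) z]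
        simp [mul_comm]

variable {d n : ℕ}


lemma line_hasDerivAt (f : EuclideanSpace ℝ (Fin d) → ℝ)
    (f' : EuclideanSpace ℝ (Fin d) → EuclideanSpace ℝ (Fin d))
    (hgrad : ∀ v, HasGradientAt f (f' v) v) (x v : EuclideanSpace ℝ (Fin d)) (t : ℝ) :
    HasDerivAt (fun t : ℝ => f (x + t • v)) ⟪f' (x + t • v), v⟫ t := by
  have hc : HasDerivAt (fun t : ℝ => x + t • v) v t := by
    simpa using ((hasDerivAt_id t).smul_const v).const_add x
  have hf := (hgrad (x + t • v)).hasFDerivAt.comp_hasDerivAt t hc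
  simpa [InnerProductSpace.toDual_apply_apply, Function.comp_def] using hf

lemma convex_grad_ineq (f : EuclideanSpace ℝ (Fin d) → ℝ)
    (f' : EuclideanSpace ℝ (Fin d) → EuclideanSpace ℝ (Fin d))
    (hconv : ConvexOn ℝ Set.univ f)
    (hgrad : ∀ v, HasGradientAt f (f' v) v) (x y : EuclideanSpace ℝ (Fin d)) :
    f x + ⟪f' x, y - x⟫ ≤ f y := by
  set v := y - x with hv
  have hg : ConvexOn ℝ Set.univ (fun t : ℝ => f (x + t • v)) := by
    have h1 := hconv.comp_affineMap (AffineMap.lineMap x y : ℝ →ᵃ[ℝ] EuclideanSpace ℝ (Fin d))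
    have h2 : ∀ t : ℝ, (AffineMap.lineMap x y : ℝ →ᵃ[ℝ] _) t = x + t • v := by
      intro t; simp [AffineMap.lineMap_apply, hv]; module
    refine ConvexOn.congr (h1.subset (by simp) convex_univ) ?_
    intro t _; simp [Function.comp, h2]
  have h3 := hg.le_slope_of_hasDerivAt (Set.mem_univ (0:ℝ)) (Set.mem_univ 1) zero_lt_one
    (line_hasDerivAt f f' hgrad x v 0)
  rw [slope_def_field] at h3
  simp only [zero_smul, add_zero, one_smul] at h3
  have : x + v = y := by rw [hv]; abel
  rw [this] at h3
  rw [sub_zero, div_one] at h3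
  linarith

lemma descent_lemma (f : EuclideanSpace ℝ (Fin d) → ℝ)
    (f' : EuclideanSpace ℝ (Fin d) → EuclideanSpace ℝ (Fin d)) (L : ℝ) (hL : 0 < L)
    (hgrad : ∀ v, HasGradientAt f (f' v) v)
    (hlip : LipschitzWith (Real.toNNReal L) f') (x v : EuclideanSpace ℝ (Fin d)) :
    f (x + v) ≤ f x + ⟪f' x, v⟫ + L / 2 * ‖v‖ ^ 2 := by
  have hcontf' : Continuous f' := hlip.continuous
  have hcont : Continuous (fun t : ℝ => ⟪f' (x + t • v), v⟫) := by
    exact (hcontf'.comp (continuous_const.add (continuous_id.smul continuous_const))).inner continuous_const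
  have heq : f (x + v) - f x = ∫ t in (0:ℝ)..1, ⟪f' (x + t • v), v⟫ := by
    have := intervalIntegral.integral_eq_sub_of_hasDerivAt
      (f := fun t : ℝ => f (x + t • v)) (f' := fun t : ℝ => ⟪f' (x + t • v), v⟫)
      (a := 0) (b := 1)
      (fun t _ => line_hasDerivAt f f' hgrad x v t) (hcont.intervalIntegrable 0 1)
    simp only [one_smul, zero_smul, add_zero] at this
    linarith [this]
  have hb : ∀ t ∈ Set.Icc (0:ℝ) 1, ⟪f' (x + t • v), v⟫ ≤ ⟪f' x, v⟫ + L * t * ‖v‖ ^ 2 := by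
    intro t ht
    have h1 : ⟪f' (x + t • v) - f' x, v⟫ ≤ ‖f' (x + t • v) - f' x‖ * ‖v‖ :=
      real_inner_le_norm _ _
    have h2 : ‖f' (x + t • v) - f' x‖ ≤ L * (t * ‖v‖) := by
      have := hlip.dist_le_mul (x + t • v) x
      rw [dist_eq_norm, dist_eq_norm] at this
      have h3 : x + t • v - x = t • v := by abel
      rw [h3] at this
      calc ‖f' (x + t • v) - f' x‖ ≤ (Real.toNNReal L : ℝ) * ‖t • v‖ := this
        _ = L * (t * ‖v‖) := by
            rw [Real.coe_toNNReal L hL.le, norm_smul, Real.norm_eq_abs,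
              abs_of_nonneg ht.1]
    have h4 : ⟪f' (x + t • v) - f' x, v⟫ = ⟪f' (x + t • v), v⟫ - ⟪f' x, v⟫ := by
      rw [inner_sub_left]
    nlinarith [norm_nonneg v, ht.1]
  have hint : ∫ t in (0:ℝ)..1, ⟪f' (x + t • v), v⟫
      ≤ ∫ t in (0:ℝ)..1, (⟪f' x, v⟫ + L * t * ‖v‖ ^ 2) := by
    apply intervalIntegral.integral_mono_on zero_le_one
      (hcont.intervalIntegrable 0 1) ((by fun_prop : Continuous fun t : ℝ => ⟪f' x, v⟫ + L * t * ‖v‖ ^ 2).intervalIntegrable 0 1) hb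
  have hval : ∫ t in (0:ℝ)..1, (⟪f' x, v⟫ + L * t * ‖v‖ ^ 2) = ⟪f' x, v⟫ + L / 2 * ‖v‖ ^ 2 := by
    rw [intervalIntegral.integral_add (continuous_const.intervalIntegrable 0 1)
      ((by fun_prop : Continuous fun t : ℝ => L * t * ‖v‖ ^ 2).intervalIntegrable 0 1)]
    simp only [intervalIntegral.integral_const, smul_eq_mul, one_mul, sub_zero]
    have : ∫ t in (0:ℝ)..1, L * t * ‖v‖ ^ 2 = L / 2 * ‖v‖ ^ 2 := by
      have h5 : ∀ t : ℝ, L * t * ‖v‖ ^ 2 = t * (L * ‖v‖ ^ 2) := by intro t; ring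
      simp only [h5]
      rw [intervalIntegral.integral_mul_const, integral_id]
      ring_nf
    rw [this]
  linarith [heq, hint, hval]


lemma sumG_eq (hn : 0 < n) (f' : EuclideanSpace ℝ (Fin d) → EuclideanSpace ℝ (Fin d))
    (G : EuclideanSpace ℝ (Fin d) → Fin n → EuclideanSpace ℝ (Fin d))
    (hunbiased : ∀ v, (1 / (n : ℝ)) • ∑ z, G v z = f' v) (x : EuclideanSpace ℝ (Fin d)) :
    ∑ z, G x z = (n : ℝ) • f' x := by
  have hne : (n : ℝ) ≠ 0 := Nat.cast_ne_zero.2 hn.ne'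
  rw [← hunbiased x, smul_smul]
  rw [mul_one_div, div_self hne, one_smul]

lemma inner_sumG (hn : 0 < n) (f' : EuclideanSpace ℝ (Fin d) → EuclideanSpace ℝ (Fin d))
    (G : EuclideanSpace ℝ (Fin d) → Fin n → EuclideanSpace ℝ (Fin d))
    (hunbiased : ∀ v, (1 / (n : ℝ)) • ∑ z, G v z = f' v) (x v : EuclideanSpace ℝ (Fin d)) :
    ∑ z, ⟪v, G x z⟫ = (n : ℝ) * ⟪f' x, v⟫ := by
  rw [← inner_sum, sumG_eq hn f' G hunbiased, real_inner_smul_right, real_inner_comm]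

lemma step_bound_A (hn : 0 < n)
    (f : EuclideanSpace ℝ (Fin d) → ℝ)
    (f' : EuclideanSpace ℝ (Fin d) → EuclideanSpace ℝ (Fin d))
    (G : EuclideanSpace ℝ (Fin d) → Fin n → EuclideanSpace ℝ (Fin d))
    (ρ L η : ℝ) (wstar : EuclideanSpace ℝ (Fin d))
    (hL : 0 < L) (hρ : 1 ≤ ρ)
    (hconv : ConvexOn ℝ Set.univ f)
    (hgrad : ∀ v, HasGradientAt f (f' v) v)
    (hmin : ∀ v, f wstar ≤ f v)
    (hunbiased : ∀ v, (1 / (n : ℝ)) • ∑ z, G v z = f' v)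
    (hwgc : ∀ v, (1 / (n : ℝ)) * ∑ z, ‖G v z‖ ^ 2 ≤ 2 * ρ * L * (f v - f wstar))
    (hη : η = 1 / (4 * ρ * L)) (x : EuclideanSpace ℝ (Fin d)) :
    ∑ z : Fin n, ‖x - η • G x z - wstar‖ ^ 2
      ≤ (n : ℝ) * (‖x - wstar‖ ^ 2 - 3 * η / 2 * (f x - f wstar)) := by
  have hρL : 0 < ρ * L := mul_pos (lt_of_lt_of_le one_pos hρ) hL
  have hηpos : 0 < η := by rw [hη]; positivity
  have hhalf : η * (2 * (ρ * L)) = 1 / 2 := by rw [hη]; field_simp; ring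
  have hnpos : (0:ℝ) < n := Nat.cast_pos.2 hn
  have hfx : 0 ≤ f x - f wstar := sub_nonneg.2 (hmin x)
  have hCI : f x - f wstar ≤ ⟪f' x, x - wstar⟫ := by
    have h := convex_grad_ineq f f' hconv hgrad x wstar
    have h2 : ⟪f' x, wstar - x⟫ = -⟪f' x, x - wstar⟫ := by
      rw [show wstar - x = -(x - wstar) by abel, inner_neg_right]
    linarith [h, h2.le, h2.ge]
  have hW : ∑ z, ‖G x z‖ ^ 2 ≤ (n : ℝ) * (2 * ρ * L * (f x - f wstar)) := by
    have h := hwgc x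
    rw [one_div, inv_mul_le_iff₀ hnpos] at h
    linarith [h]
  have e0 : ∀ z, ‖x - η • G x z - wstar‖ ^ 2
      = ‖x - wstar‖ ^ 2 - 2 * (η * ⟪x - wstar, G x z⟫) + η ^ 2 * ‖G x z‖ ^ 2 := by
    intro z
    rw [sub_right_comm, norm_sub_sq_real, real_inner_smul_right, norm_smul]
    simp [Real.norm_eq_abs, mul_pow, sq_abs]
  have E1 : ∑ z : Fin n, ‖x - η • G x z - wstar‖ ^ 2
      = (n : ℝ) * ‖x - wstar‖ ^ 2 - 2 * η * ((n : ℝ) * ⟪f' x, x - wstar⟫)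
        + η ^ 2 * ∑ z, ‖G x z‖ ^ 2 := by
    rw [Finset.sum_congr rfl fun z _ => e0 z]
    rw [Finset.sum_add_distrib, Finset.sum_sub_distrib, Finset.sum_const, ← Finset.mul_sum,
      ← Finset.mul_sum, card_univ]
    rw [inner_sumG hn f' G hunbiased, Fintype.card_fin, nsmul_eq_mul, ← Finset.mul_sum]
    ring
  rw [E1]
  have key1 : 2 * η * ((n : ℝ) * (f x - f wstar)) ≤ 2 * η * ((n : ℝ) * ⟪f' x, x - wstar⟫) := by
    have := mul_le_mul_of_nonneg_left hCI hnpos.le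
    nlinarith [hηpos.le]
  have key2 : η ^ 2 * ∑ z, ‖G x z‖ ^ 2 ≤ η / 2 * ((n : ℝ) * (f x - f wstar)) := by
    have h1 : η ^ 2 * ∑ z, ‖G x z‖ ^ 2 ≤ η ^ 2 * ((n : ℝ) * (2 * ρ * L * (f x - f wstar))) :=
      mul_le_mul_of_nonneg_left hW (by positivity)
    have h2 : η ^ 2 * ((n : ℝ) * (2 * ρ * L * (f x - f wstar)))
        = (η * (2 * (ρ * L))) * (η * ((n:ℝ) * (f x - f wstar))) := by ring
    rw [h2, hhalf] at h1
    linarith [h1]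
  linarith [key1, key2]

lemma step_bound_B (hn : 0 < n)
    (f : EuclideanSpace ℝ (Fin d) → ℝ)
    (f' : EuclideanSpace ℝ (Fin d) → EuclideanSpace ℝ (Fin d))
    (G : EuclideanSpace ℝ (Fin d) → Fin n → EuclideanSpace ℝ (Fin d))
    (ρ L η : ℝ) (wstar : EuclideanSpace ℝ (Fin d))
    (hL : 0 < L) (hρ : 1 ≤ ρ)
    (hgrad : ∀ v, HasGradientAt f (f' v) v)
    (hlip : LipschitzWith (Real.toNNReal L) f')
    (hmin : ∀ v, f wstar ≤ f v)
    (hunbiased : ∀ v, (1 / (n : ℝ)) • ∑ z, G v z = f' v)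
    (hwgc : ∀ v, (1 / (n : ℝ)) * ∑ z, ‖G v z‖ ^ 2 ≤ 2 * ρ * L * (f v - f wstar))
    (hη : η = 1 / (4 * ρ * L)) (x : EuclideanSpace ℝ (Fin d)) :
    ∑ z : Fin n, (f (x - η • G x z) - f wstar)
      ≤ (n : ℝ) * (17 / 16 * (f x - f wstar)) := by
  have hρpos : 0 < ρ := lt_of_lt_of_le one_pos hρ
  have hρL : 0 < ρ * L := mul_pos hρpos hL
  have hηpos : 0 < η := by rw [hη]; positivity
  have h16 : L * η ^ 2 * (ρ * L) = 1 / (16 * ρ) := by rw [hη]; field_simp; ring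
  have hnpos : (0:ℝ) < n := Nat.cast_pos.2 hn
  have hfx : 0 ≤ f x - f wstar := sub_nonneg.2 (hmin x)
  have hW : ∑ z, ‖G x z‖ ^ 2 ≤ (n : ℝ) * (2 * ρ * L * (f x - f wstar)) := by
    have h := hwgc x
    rw [one_div, inv_mul_le_iff₀ hnpos] at h
    linarith [h]
  have hd : ∀ z : Fin n, f (x - η • G x z) - f wstar
      ≤ (f x - f wstar) - η * ⟪f' x, G x z⟫ + L / 2 * (η ^ 2 * ‖G x z‖ ^ 2) := by
    intro z
    have h := descent_lemma f f' L hL hgrad hlip x (-(η • G x z))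
    rw [show x + -(η • G x z) = x - η • G x z by abel, inner_neg_right,
      real_inner_smul_right, norm_neg, norm_smul] at h
    simp only [Real.norm_eq_abs] at h
    rw [mul_pow, sq_abs] at h
    linarith [h]
  have S1 : ∑ z : Fin n, (f (x - η • G x z) - f wstar)
      ≤ (n:ℝ) * (f x - f wstar) - η * ((n:ℝ) * ‖f' x‖ ^ 2)
        + L / 2 * (η ^ 2 * ∑ z, ‖G x z‖ ^ 2) := by
    calc ∑ z : Fin n, (f (x - η • G x z) - f wstar)
        ≤ ∑ z : Fin n, ((f x - f wstar) - η * ⟪f' x, G x z⟫ + L / 2 * (η ^ 2 * ‖G x z‖ ^ 2)) :=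
          Finset.sum_le_sum fun z _ => hd z
      _ = (n:ℝ) * (f x - f wstar) - η * ∑ z, ⟪f' x, G x z⟫
            + L / 2 * (η ^ 2 * ∑ z, ‖G x z‖ ^ 2) := by
          rw [Finset.sum_add_distrib, Finset.sum_sub_distrib, Finset.sum_const, card_univ,
            Fintype.card_fin, nsmul_eq_mul, ← Finset.mul_sum, ← Finset.mul_sum, ← Finset.mul_sum]
      _ = (n:ℝ) * (f x - f wstar) - η * ((n:ℝ) * ‖f' x‖ ^ 2)
            + L / 2 * (η ^ 2 * ∑ z, ‖G x z‖ ^ 2) := by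
          rw [inner_sumG hn f' G hunbiased, real_inner_self_eq_norm_sq]
  have key3 : L / 2 * (η ^ 2 * ∑ z, ‖G x z‖ ^ 2) ≤ (n:ℝ) * (1 / 16 * (f x - f wstar)) := by
    have h1 : L / 2 * (η ^ 2 * ∑ z, ‖G x z‖ ^ 2)
        ≤ L / 2 * (η ^ 2 * ((n : ℝ) * (2 * ρ * L * (f x - f wstar)))) := by
      have := mul_le_mul_of_nonneg_left hW (le_of_lt (by positivity : (0:ℝ) < η ^ 2))
      nlinarith [hL.le]
    have h2 : L / 2 * (η ^ 2 * ((n : ℝ) * (2 * ρ * L * (f x - f wstar))))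
        = (L * η ^ 2 * (ρ * L)) * ((n:ℝ) * (f x - f wstar)) := by ring
    rw [h2, h16] at h1
    have h3 : 1 / (16 * ρ) * ((n:ℝ) * (f x - f wstar)) ≤ 1 / 16 * ((n:ℝ) * (f x - f wstar)) := by
      apply mul_le_mul_of_nonneg_right _ (by positivity)
      rw [div_le_div_iff₀ (by positivity) (by norm_num)]
      nlinarith [hρ]
    calc L / 2 * (η ^ 2 * ∑ z, ‖G x z‖ ^ 2) ≤ 1 / (16 * ρ) * ((n:ℝ) * (f x - f wstar)) := h1
      _ ≤ 1 / 16 * ((n:ℝ) * (f x - f wstar)) := h3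
      _ = (n:ℝ) * (1 / 16 * (f x - f wstar)) := by ring
  have hgn : 0 ≤ η * ((n:ℝ) * ‖f' x‖ ^ 2) := by positivity
  nlinarith [S1, key3, hgn]

/-- Extension of a finite noise sequence, matching the one in `ExpN`. -/
def sgdExt (n k : ℕ) (hn : 0 < n) (σ : Fin k → Fin n) : ℕ → Fin n :=
  fun i => if hi : i < k then σ ⟨i, hi⟩ else ⟨0, hn⟩

lemma sgd_sum_bound (d n : ℕ) (hn : 0 < n)
    (f : EuclideanSpace ℝ (Fin d) → ℝ)
    (f' : EuclideanSpace ℝ (Fin d) → EuclideanSpace ℝ (Fin d))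
    (G : EuclideanSpace ℝ (Fin d) → Fin n → EuclideanSpace ℝ (Fin d))
    (ρ L η : ℝ) (w0 wstar : EuclideanSpace ℝ (Fin d))
    (W : (ℕ → Fin n) → ℕ → EuclideanSpace ℝ (Fin d))
    (hL : 0 < L) (hρ : 1 ≤ ρ)
    (hconv : ConvexOn ℝ Set.univ f)
    (hgrad : ∀ v, HasGradientAt f (f' v) v)
    (hlip : LipschitzWith (Real.toNNReal L) f')
    (hmin : ∀ v, f wstar ≤ f v)
    (hunbiased : ∀ v, (1 / (n : ℝ)) • ∑ z, G v z = f' v)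
    (hwgc : ∀ v, (1 / (n : ℝ)) * ∑ z, ‖G v z‖ ^ 2 ≤ 2 * ρ * L * (f v - f wstar))
    (hη : η = 1 / (4 * ρ * L))
    (hinit : f w0 - f wstar ≤ (L / 2) * ‖w0 - wstar‖ ^ 2)
    (hW0 : ∀ ω, W ω 0 = w0)
    (hWs : ∀ ω k, W ω (k + 1) = W ω k - η • G (W ω k) (ω k)) :
    ∀ k : ℕ, 0 < k →
      (∑ σ : Fin k → Fin n,
          f ((1 / (k : ℝ)) • ∑ i ∈ Finset.Icc 1 k, W (sgdExt n k hn σ) i)) / (n : ℝ) ^ k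
          - f wstar
        ≤ 4 * (1 + ρ) * L * ‖w0 - wstar‖ ^ 2 / k := by
  intro k hk
  classical
  have hρpos : 0 < ρ := lt_of_lt_of_le one_pos hρ
  have hρL : 0 < ρ * L := mul_pos hρpos hL
  have hηpos : 0 < η := by rw [hη]; positivity
  have hηval : η * (4 * ρ * L) = 1 := by rw [hη]; field_simp
  have hnpos : (0:ℝ) < n := Nat.cast_pos.2 hn
  have hkpos : (0:ℝ) < k := Nat.cast_pos.2 hk
  have hNpos : (0:ℝ) < (n:ℝ) ^ k := by positivity
  have hr0 : (0:ℝ) ≤ ‖w0 - wstar‖ ^ 2 := sq_nonneg _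
  have hcard : (Fintype.card (Fin k → Fin n) : ℝ) = (n:ℝ) ^ k := by
    rw [Fintype.card_fun, Fintype.card_fin, Fintype.card_fin]; push_cast; rfl
  -- W depends only on earlier noise
  have Wdep : ∀ (i : ℕ) (ω ω' : ℕ → Fin n), (∀ j, j < i → ω j = ω' j) → W ω i = W ω' i := by
    intro i
    induction i with
    | zero => intro ω ω' _; rw [hW0, hW0]
    | succ m ih =>
        intro ω ω' h
        rw [hWs, hWs, ih ω ω' (fun j hj => h j (Nat.lt_succ_of_lt hj)), h m (Nat.lt_succ_self m)]
  have hext_upd : ∀ (σ : Fin k → Fin n) (i : ℕ) (hi : i < k) (z : Fin n) (j : ℕ), j ≠ i →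
      sgdExt n k hn (Function.update σ ⟨i, hi⟩ z) j = sgdExt n k hn σ j := by
    intro σ i hi z j hj
    unfold sgdExt
    split_ifs with h
    · rw [Function.update_of_ne (Fin.ne_of_val_ne hj)]
    · rfl
  have hext_i : ∀ (σ : Fin k → Fin n) (i : ℕ) (hi : i < k) (z : Fin n),
      sgdExt n k hn (Function.update σ ⟨i, hi⟩ z) i = z := by
    intro σ i hi z
    unfold sgdExt
    rw [dif_pos hi, Function.update_self]
  have hW_upd : ∀ (σ : Fin k → Fin n) (i : ℕ) (hi : i < k) (z : Fin n),
      W (sgdExt n k hn (Function.update σ ⟨i, hi⟩ z)) i = W (sgdExt n k hn σ) i := by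
    intro σ i hi z
    exact Wdep i _ _ (fun j hj => hext_upd σ i hi z j (Nat.ne_of_lt hj))
  have hW_step : ∀ (σ : Fin k → Fin n) (i : ℕ) (hi : i < k) (z : Fin n),
      W (sgdExt n k hn (Function.update σ ⟨i, hi⟩ z)) (i + 1)
        = W (sgdExt n k hn σ) i - η • G (W (sgdExt n k hn σ) i) z := by
    intro σ i hi z
    rw [hWs, hW_upd σ i hi z, hext_i σ i hi z]
  -- the two averaged sequences
  set A : ℕ → ℝ := fun i => ∑ σ : Fin k → Fin n, ‖W (sgdExt n k hn σ) i - wstar‖ ^ 2 with hA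
  set B : ℕ → ℝ := fun i => ∑ σ : Fin k → Fin n, (f (W (sgdExt n k hn σ) i) - f wstar) with hB
  have hBnn : ∀ i, 0 ≤ B i := fun i =>
    Finset.sum_nonneg fun σ _ => sub_nonneg.2 (hmin _)
  have hAnn : ∀ i, 0 ≤ A i := fun i => Finset.sum_nonneg fun σ _ => sq_nonneg _
  have hA0 : A 0 = (n:ℝ) ^ k * ‖w0 - wstar‖ ^ 2 := by
    rw [hA]
    simp only [hW0]
    rw [Finset.sum_const, card_univ, nsmul_eq_mul, hcard]
  have hA_step : ∀ (i : ℕ), i < k → A (i + 1) + 3 * η / 2 * B i ≤ A i := by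
    intro i hi
    have h := sum_update_le hn ⟨i, hi⟩
      (fun σ => ‖W (sgdExt n k hn σ) (i + 1) - wstar‖ ^ 2)
      (fun σ => ‖W (sgdExt n k hn σ) i - wstar‖ ^ 2
        - 3 * η / 2 * (f (W (sgdExt n k hn σ) i) - f wstar))
      (fun σ z => by rw [hW_upd σ i hi z])
      (fun σ => by
        calc ∑ z : Fin n, ‖W (sgdExt n k hn (Function.update σ ⟨i, hi⟩ z)) (i + 1) - wstar‖ ^ 2
            = ∑ z : Fin n, ‖W (sgdExt n k hn σ) i - η • G (W (sgdExt n k hn σ) i) z - wstar‖ ^ 2 :=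
              Finset.sum_congr rfl fun z _ => by rw [hW_step σ i hi z]
          _ ≤ _ := step_bound_A hn f f' G ρ L η wstar hL hρ hconv hgrad hmin hunbiased hwgc hη _)
    have h2 : ∑ σ : Fin k → Fin n, (‖W (sgdExt n k hn σ) i - wstar‖ ^ 2
        - 3 * η / 2 * (f (W (sgdExt n k hn σ) i) - f wstar)) = A i - 3 * η / 2 * B i := by
      rw [Finset.sum_sub_distrib, ← Finset.mul_sum, hA, hB]
    rw [h2] at h
    linarith [h]
  have hB_step : ∀ (i : ℕ), i < k → B (i + 1) ≤ 17 / 16 * B i := by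
    intro i hi
    have h := sum_update_le hn ⟨i, hi⟩
      (fun σ => f (W (sgdExt n k hn σ) (i + 1)) - f wstar)
      (fun σ => 17 / 16 * (f (W (sgdExt n k hn σ) i) - f wstar))
      (fun σ z => by rw [hW_upd σ i hi z])
      (fun σ => by
        calc ∑ z : Fin n, (f (W (sgdExt n k hn (Function.update σ ⟨i, hi⟩ z)) (i + 1)) - f wstar)
            = ∑ z : Fin n, (f (W (sgdExt n k hn σ) i - η • G (W (sgdExt n k hn σ) i) z) - f wstar) :=
              Finset.sum_congr rfl fun z _ => by rw [hW_step σ i hi z]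
          _ ≤ _ := step_bound_B hn f f' G ρ L η wstar hL hρ hgrad hlip hmin hunbiased hwgc hη _)
    have h2 : ∑ σ : Fin k → Fin n, 17 / 16 * (f (W (sgdExt n k hn σ) i) - f wstar)
        = 17 / 16 * B i := by rw [← Finset.mul_sum, hB]
    rw [h2] at h
    exact h
  -- telescoping
  have tele : ∀ m, m ≤ k → A m + 3 * η / 2 * ∑ i ∈ range m, B i ≤ A 0 := by
    intro m
    induction m with
    | zero => intro _; simp
    | succ p ih =>
        intro hpk
        have hp := ih (Nat.le_of_succ_le hpk)
        have hstep := hA_step p (Nat.lt_of_succ_le hpk)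
        rw [Finset.sum_range_succ, mul_add]
        linarith [hp, hstep]
  have sum1 : 3 * η / 2 * ∑ i ∈ range k, B i ≤ A 0 := by
    have := tele k le_rfl
    linarith [hAnn k]
  have sum2 : ∑ i ∈ Icc 1 k, B i ≤ 17 / 16 * ∑ i ∈ range k, B i := by
    have e : ∑ i ∈ Icc 1 k, B i = ∑ i ∈ range k, B (i + 1) := by
      rw [← Finset.Ico_add_one_right_eq_Icc, Finset.sum_Ico_eq_sum_range]
      simp [add_comm]
    rw [e, Finset.mul_sum]
    exact Finset.sum_le_sum fun i hi => hB_step i (Finset.mem_range.1 hi)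
  -- Jensen
  have jensen : ∀ σ : Fin k → Fin n,
      f ((1 / (k : ℝ)) • ∑ i ∈ Icc 1 k, W (sgdExt n k hn σ) i)
        ≤ (1 / (k : ℝ)) * ∑ i ∈ Icc 1 k, f (W (sgdExt n k hn σ) i) := by
    intro σ
    have hsum : ∑ _i ∈ Icc 1 k, (1 / (k:ℝ)) = 1 := by
      rw [Finset.sum_const, Nat.card_Icc]
      simp only [Nat.add_sub_cancel, nsmul_eq_mul]
      field_simp
    have h := hconv.map_sum_le (t := Icc 1 k) (w := fun _ => 1 / (k:ℝ))
      (p := fun i => W (sgdExt n k hn σ) i)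
      (fun i _ => by positivity) hsum (fun i _ => Set.mem_univ _)
    rw [Finset.smul_sum]
    calc f (∑ i ∈ Icc 1 k, (1 / (k:ℝ)) • W (sgdExt n k hn σ) i)
        ≤ ∑ i ∈ Icc 1 k, (1 / (k:ℝ)) * f (W (sgdExt n k hn σ) i) := h
      _ = (1 / (k : ℝ)) * ∑ i ∈ Icc 1 k, f (W (sgdExt n k hn σ) i) := by
          rw [Finset.mul_sum]
  -- sum over σ of f at averaged point
  have hXY : ∑ σ : Fin k → Fin n, f ((1 / (k : ℝ)) • ∑ i ∈ Icc 1 k, W (sgdExt n k hn σ) i)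
      ≤ 1 / (k:ℝ) * (∑ i ∈ Icc 1 k, B i) + (n:ℝ) ^ k * f wstar := by
    have e2 : ∀ i : ℕ, ∑ σ : Fin k → Fin n, f (W (sgdExt n k hn σ) i)
        = B i + (n:ℝ) ^ k * f wstar := by
      intro i
      rw [hB]
      simp only
      rw [Finset.sum_sub_distrib, Finset.sum_const, card_univ, nsmul_eq_mul, hcard]
      ring
    calc ∑ σ : Fin k → Fin n, f ((1 / (k : ℝ)) • ∑ i ∈ Icc 1 k, W (sgdExt n k hn σ) i)
        ≤ ∑ σ : Fin k → Fin n, (1 / (k : ℝ)) * ∑ i ∈ Icc 1 k, f (W (sgdExt n k hn σ) i) :=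
          Finset.sum_le_sum fun σ _ => jensen σ
      _ = (1 / (k:ℝ)) * ∑ i ∈ Icc 1 k, ∑ σ : Fin k → Fin n, f (W (sgdExt n k hn σ) i) := by
          rw [← Finset.mul_sum, Finset.sum_comm]
      _ = (1 / (k:ℝ)) * ∑ i ∈ Icc 1 k, (B i + (n:ℝ) ^ k * f wstar) := by
          rw [Finset.sum_congr rfl fun i _ => e2 i]
      _ = 1 / (k:ℝ) * (∑ i ∈ Icc 1 k, B i) + 1 / (k:ℝ) * ((k:ℝ) * ((n:ℝ) ^ k * f wstar)) := by
          rw [Finset.sum_add_distrib, Finset.sum_const, Nat.card_Icc, Nat.add_sub_cancel,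
            nsmul_eq_mul, mul_add]
      _ = 1 / (k:ℝ) * (∑ i ∈ Icc 1 k, B i) + (n:ℝ) ^ k * f wstar := by
          field_simp
  -- bound on S := ∑_{Icc 1 k} B i
  have hS : ∑ i ∈ Icc 1 k, B i ≤ 17 / 6 * ρ * L * ((n:ℝ) ^ k * ‖w0 - wstar‖ ^ 2) := by
    have hT : 3 * η / 2 * ∑ i ∈ range k, B i ≤ (n:ℝ) ^ k * ‖w0 - wstar‖ ^ 2 := by
      rw [← hA0]; exact sum1
    have h1 : (3 * η / 2 * ∑ i ∈ range k, B i) * (4 * ρ * L)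
        ≤ ((n:ℝ) ^ k * ‖w0 - wstar‖ ^ 2) * (4 * ρ * L) :=
      mul_le_mul_of_nonneg_right hT (by positivity)
    have h2 : (3 * η / 2 * ∑ i ∈ range k, B i) * (4 * ρ * L)
        = 3 / 2 * (∑ i ∈ range k, B i) * (η * (4 * ρ * L)) := by ring
    rw [h2, hηval, mul_one] at h1
    nlinarith [sum2, h1]
  -- assemble
  have final1 : (∑ σ : Fin k → Fin n,
      f ((1 / (k : ℝ)) • ∑ i ∈ Icc 1 k, W (sgdExt n k hn σ) i)) / (n : ℝ) ^ k - f wstar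
      ≤ (∑ i ∈ Icc 1 k, B i) / ((k:ℝ) * (n:ℝ) ^ k) := by
    have h3 := (div_le_div_iff_of_pos_right hNpos).2 hXY
    have h4 : (1 / (k:ℝ) * (∑ i ∈ Icc 1 k, B i) + (n:ℝ) ^ k * f wstar) / (n:ℝ) ^ k
        = (∑ i ∈ Icc 1 k, B i) / ((k:ℝ) * (n:ℝ) ^ k) + f wstar := by
      field_simp
    linarith [h3, h4.le, h4.ge]
  calc (∑ σ : Fin k → Fin n,
      f ((1 / (k : ℝ)) • ∑ i ∈ Icc 1 k, W (sgdExt n k hn σ) i)) / (n : ℝ) ^ k - f wstar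
      ≤ (∑ i ∈ Icc 1 k, B i) / ((k:ℝ) * (n:ℝ) ^ k) := final1
    _ ≤ (17 / 6 * ρ * L * ((n:ℝ) ^ k * ‖w0 - wstar‖ ^ 2)) / ((k:ℝ) * (n:ℝ) ^ k) :=
        (div_le_div_iff_of_pos_right (by positivity)).2 hS
    _ = 17 / 6 * ρ * L * ‖w0 - wstar‖ ^ 2 / k := by
        field_simp
    _ ≤ 4 * (1 + ρ) * L * ‖w0 - wstar‖ ^ 2 / k := by
        apply (div_le_div_iff_of_pos_right hkpos).2
        nlinarith [hr0, hL.le, hρ, hρpos.le]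


/-- Expectation over the first `k` steps of uniform i.i.d. noise in `Fin n`. -/
noncomputable def ExpN (n k : ℕ) (hn : 0 < n) (h : (ℕ → Fin n) → ℝ) : ℝ :=
  (∑ σ : Fin k → Fin n, h (fun i => if hi : i < k then σ ⟨i, hi⟩ else ⟨0, hn⟩)) / (n : ℝ) ^ k

/-- Convex SGD rate under the weak growth condition: with
`η = 1/(4ρL)`, the averaged iterate satisfies
`E f(w̄_k) − f(w*) ≤ 4(1+ρ)L‖w₀ − w*‖²/k`. -/
theorem sgd_convex_rate_wgc
    (d n : ℕ) (hn : 0 < n)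
    (f : EuclideanSpace ℝ (Fin d) → ℝ)
    (f' : EuclideanSpace ℝ (Fin d) → EuclideanSpace ℝ (Fin d))
    (G : EuclideanSpace ℝ (Fin d) → Fin n → EuclideanSpace ℝ (Fin d))
    (ρ L η : ℝ) (w0 wstar : EuclideanSpace ℝ (Fin d))
    (W : (ℕ → Fin n) → ℕ → EuclideanSpace ℝ (Fin d))
    (hL : 0 < L) (hρ : 1 ≤ ρ)
    (hconv : ConvexOn ℝ Set.univ f)
    (hgrad : ∀ v, HasGradientAt f (f' v) v)
    (hlip : LipschitzWith (Real.toNNReal L) f')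
    (hmin : ∀ v, f wstar ≤ f v)
    (hunbiased : ∀ v, (1 / (n : ℝ)) • ∑ z, G v z = f' v)
    (hwgc : ∀ v, (1 / (n : ℝ)) * ∑ z, ‖G v z‖ ^ 2 ≤ 2 * ρ * L * (f v - f wstar))
    (hη : η = 1 / (4 * ρ * L))
    (hinit : f w0 - f wstar ≤ (L / 2) * ‖w0 - wstar‖ ^ 2)
    (hW0 : ∀ ω, W ω 0 = w0)
    (hWs : ∀ ω k, W ω (k + 1) = W ω k - η • G (W ω k) (ω k)) :
    ∀ k : ℕ, 0 < k →
      ExpN n k hn (fun ω => f ((1 / (k : ℝ)) • ∑ i ∈ Finset.Icc 1 k, W ω i)) - f wstar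
        ≤ 4 * (1 + ρ) * L * ‖w0 - wstar‖ ^ 2 / k := by
  intro k hk
  have key := sgd_sum_bound d n hn f f' G ρ L η w0 wstar W hL hρ hconv hgrad hlip hmin
    hunbiased hwgc hη hinit hW0 hWs k hk
  have heq : ExpN n k hn (fun ω => f ((1 / (k : ℝ)) • ∑ i ∈ Finset.Icc 1 k, W ω i))
      = (∑ σ : Fin k → Fin n,
          f ((1 / (k : ℝ)) • ∑ i ∈ Finset.Icc 1 k, W (sgdExt n k hn σ) i)) / (n : ℝ) ^ k := rfl
  rw [heq]
  exact key
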